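/- As τ → 0⁺, Li₂(exp(-πτw)) = -πτw + π²/6 + πτw·log(1 - exp(-πτw)) + O(τ²), for any fixed complex w with Re(w) > 0. -/

import Mathlib

open Complex Filter Asymptotics Real
open MeasureTheory

/-- The dilogarithm `Li₂(z) = ∑_{n=1}^∞ z^n / n²` for `|z| ≤ 1`. -/
noncomputable def Li2 (z : ℂ) : ℂ := ∑' n : ℕ, z ^ (n + 1) / ((n : ℂ) + 1) ^ 2

lemma ftc_c (b : ℂ) (hb : b ≠ 0) :
    ∫ t in (0:ℝ)..1, (t : ℂ) * Complex.exp (-(b * t)) =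
      1 / b ^ 2 - Complex.exp (-b) / b ^ 2 - Complex.exp (-b) / b := by
  have key : ∀ t : ℝ, HasDerivAt
      (fun s : ℝ => -((s : ℂ) / b) * Complex.exp (-(b * s)) - 1 / b ^ 2 * Complex.exp (-(b * s)))
      ((t : ℂ) * Complex.exp (-(b * t))) t := by
    intro t
    have h0 : HasDerivAt (fun s : ℝ => (s : ℂ)) 1 t := by
      exact (hasDerivAt_id t).ofReal_comp
    have hg : HasDerivAt (fun s : ℝ => -(b * (s : ℂ))) (-b) t := by
      have := (h0.const_mul b).neg; simp only [mul_one] at this; exact this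
    have hexp : HasDerivAt (fun s : ℝ => Complex.exp (-(b * (s : ℂ))))
        (Complex.exp (-(b * (t : ℂ))) * (-b)) t := hg.cexp
    have h1 : HasDerivAt (fun s : ℝ => -((s : ℂ) / b)) (-(1 / b)) t := by
      exact (h0.div_const b).neg
    have h2 := (h1.mul hexp).sub (hexp.const_mul (1 / b ^ 2))
    refine h2.congr_deriv ?_
    field_simp
    ring
  have hInt : IntervalIntegrable (fun t : ℝ => (t : ℂ) * Complex.exp (-(b * t))) volume 0 1 := by
    apply Continuous.intervalIntegrable
    fun_prop
  rw [intervalIntegral.integral_eq_sub_of_hasDerivAt (fun t _ => key t) hInt]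
  push_cast
  field_simp
  simp only [mul_zero, neg_zero, Complex.exp_zero]
  ring

lemma ftc_r (b : ℝ) (hb : 0 < b) :
    ∫ t in (0:ℝ)..1, t * Real.exp (-(b * t)) ≤ 1 / b ^ 2 := by
  have key : ∀ t : ℝ, HasDerivAt
      (fun s : ℝ => -(s / b) * Real.exp (-(b * s)) - 1 / b ^ 2 * Real.exp (-(b * s)))
      (t * Real.exp (-(b * t))) t := by
    intro t
    have h0 : HasDerivAt (fun s : ℝ => s) 1 t := hasDerivAt_id t
    have hg : HasDerivAt (fun s : ℝ => -(b * s)) (-b) t := by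
      have := (h0.const_mul b).neg; simp only [mul_one] at this; exact this
    have hexp : HasDerivAt (fun s : ℝ => Real.exp (-(b * s)))
        (Real.exp (-(b * t)) * (-b)) t := by
      simpa [mul_comm] using hg.exp
    have h1 : HasDerivAt (fun s : ℝ => -(s / b)) (-(1 / b)) t := by
      exact (h0.div_const b).neg
    have h2 := (h1.mul hexp).sub (hexp.const_mul (1 / b ^ 2))
    refine h2.congr_deriv ?_
    field_simp
    ring
  have hInt : IntervalIntegrable (fun t : ℝ => t * Real.exp (-(b * t))) volume 0 1 := by
    apply Continuous.intervalIntegrable; fun_prop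
  rw [intervalIntegral.integral_eq_sub_of_hasDerivAt (fun t _ => key t) hInt]
  have h5 : Real.exp (-(b*0)) = 1 := by norm_num
  rw [h5]
  have e1 : 0 ≤ Real.exp (-(b*1)) / b := by positivity
  have e2 : 0 ≤ Real.exp (-(b*1)) / b ^ 2 := by positivity
  have hrw : -(1/b) * Real.exp (-(b*1)) - 1/b^2 * Real.exp (-(b*1)) - (-((0:ℝ)/b) * 1 - 1/b^2 * 1)
      = 1/b^2 - (Real.exp (-(b*1))/b + Real.exp (-(b*1))/b^2) := by ring
  rw [hrw]
  linarith

lemma phi_bound (u : ℂ) (hu0 : u ≠ 0) (hu : ‖u‖ ≤ 1 / 2) :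
    ‖1 - u * (Complex.exp u - 1)⁻¹‖ ≤ 2 * ‖u‖ := by
  have habs : 0 < ‖u‖ := by simpa [norm_pos_iff] using hu0
  have hq : ‖Complex.exp u - 1 - u‖ ≤ ‖u‖ ^ 2 :=
    Complex.norm_exp_sub_one_sub_id_le (by linarith)
  have hlow : ‖u‖ / 2 ≤ ‖Complex.exp u - 1‖ := by
    have h1 : ‖u‖ - ‖Complex.exp u - 1‖ ≤ ‖Complex.exp u - 1 - u‖ := by
      have h := norm_sub_norm_le u (Complex.exp u - 1)
      rw [show u - (Complex.exp u - 1) = -(Complex.exp u - 1 - u) by ring, norm_neg] at h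
      exact h
    nlinarith
  have hne : Complex.exp u - 1 ≠ 0 := by
    intro h
    rw [h] at hlow
    simp at hlow
    linarith
  have heq : 1 - u * (Complex.exp u - 1)⁻¹ = (Complex.exp u - 1 - u) * (Complex.exp u - 1)⁻¹ := by
    field_simp
  have hpos : 0 < ‖Complex.exp u - 1‖ := by linarith
  rw [heq, norm_mul, norm_inv, ← div_eq_mul_inv, div_le_iff₀ hpos]
  nlinarith

section helpers
variable (z : ℂ)

lemma basel_c : HasSum (fun n : ℕ => (1:ℂ) / ((n : ℂ) + 1) ^ 2) ((π : ℂ) ^ 2 / 6) := by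
  have h0 : HasSum (fun n : ℕ => (1:ℝ) / (n : ℝ) ^ 2) (π ^ 2 / 6) := hasSum_zeta_two
  have h1 : HasSum (fun n : ℕ => (1:ℝ) / ((n : ℝ) + 1) ^ 2) (π ^ 2 / 6) := by
    have := (hasSum_nat_add_iff (f := fun n : ℕ => (1:ℝ) / (n : ℝ) ^ 2) (g := π ^ 2 / 6) 1).mpr ?_
    · simpa using this
    · simpa using h0
  have h2 := Complex.ofRealCLM.hasSum h1
  convert h2 using 2 with n
  · push_cast; norm_num
  · push_cast; norm_num

lemma log_series {q : ℂ} (hq : ‖q‖ < 1) :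
    HasSum (fun n : ℕ => q ^ (n + 1) / ((n : ℂ) + 1)) (-Complex.log (1 - q)) := by
  have h0 : HasSum (fun n : ℕ => q ^ n / (n : ℂ)) (-Complex.log (1 - q)) :=
    Complex.hasSum_taylorSeries_neg_log (by exact hq)
  have := (hasSum_nat_add_iff (f := fun n : ℕ => q ^ n / (n : ℂ)) (g := -Complex.log (1 - q)) 1).mpr ?_
  · push_cast at this
    exact this
  · simpa using h0

lemma li2_hasSum {q : ℂ} (hq : ‖q‖ < 1) :
    HasSum (fun n : ℕ => q ^ (n + 1) / ((n : ℂ) + 1) ^ 2) (Li2 q) := by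
  have hs : Summable (fun n : ℕ => q ^ (n + 1) / ((n : ℂ) + 1) ^ 2) := by
    apply Summable.of_norm_bounded (summable_geometric_of_lt_one (norm_nonneg q) hq)
    intro n
    rw [norm_div, norm_pow, norm_pow]
    have hd : (1:ℝ) ≤ ‖(n : ℂ) + 1‖ ^ 2 := by
      have : (1:ℝ) ≤ ‖(n : ℂ) + 1‖ := by
        rw [show ((n : ℂ) + 1) = ((n + 1 : ℕ) : ℂ) by push_cast; ring, Complex.norm_natCast]
        exact_mod_cast Nat.one_le_iff_ne_zero.mpr (Nat.succ_ne_zero n)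
      nlinarith
    have hq1 : ‖q‖ ≤ 1 := le_of_lt hq
    have hnn : (0:ℝ) ≤ ‖q‖ := norm_nonneg q
    calc ‖q‖ ^ (n + 1) / ‖(n : ℂ) + 1‖ ^ 2 ≤ ‖q‖ ^ (n + 1) / 1 := by
          apply div_le_div_of_nonneg_left _ _ hd <;> positivity
      _ = ‖q‖ ^ n * ‖q‖ := by ring
      _ ≤ ‖q‖ ^ n * 1 := by nlinarith [pow_nonneg hnn n]
      _ = ‖q‖ ^ n := by rw [mul_one]
  exact hs.hasSum
end helpers

set_option maxHeartbeats 1000000 in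
lemma main_est (z : ℂ) (hre : 0 < z.re) (hz : ‖z‖ ≤ 1 / 2) :
    ‖Li2 (Complex.exp (-z)) -
      (-z + (π : ℂ) ^ 2 / 6 + z * Complex.log (1 - Complex.exp (-z)))‖ ≤
      2 * ‖z‖ ^ 2 := by
  set q := Complex.exp (-z) with hq_def
  have hz0 : z ≠ 0 := fun h => by simp [h] at hre
  have hqlt : ‖q‖ < 1 := by
    rw [hq_def, Complex.norm_exp]
    exact Real.exp_lt_one_iff.mpr (by simpa using hre)
  -- the three series
  have h1 := li2_hasSum hqlt
  have h2 := log_series hqlt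
  have h3 := basel_c
  have hsumA : HasSum
      (fun n : ℕ => q ^ (n + 1) / ((n : ℂ) + 1) ^ 2 - 1 / ((n : ℂ) + 1) ^ 2 +
        z * (q ^ (n + 1) / ((n : ℂ) + 1)))
      (Li2 q - (π : ℂ) ^ 2 / 6 + z * (-Complex.log (1 - q))) :=
    (h1.sub h3).add (h2.mul_left z)
  -- closed form for each term as an integral
  set H : ℕ → ℝ → ℂ := fun n t => (t : ℂ) * z ^ 2 * Complex.exp (-((((n : ℂ) + 1) * z) * t))
    with hH_def
  have hHval : ∀ n : ℕ, ∫ t in Set.Ioc (0:ℝ) 1, H n t =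
      -(q ^ (n + 1) / ((n : ℂ) + 1) ^ 2 - 1 / ((n : ℂ) + 1) ^ 2 +
        z * (q ^ (n + 1) / ((n : ℂ) + 1))) := by
    intro n
    have hn1 : ((n : ℂ) + 1) ≠ 0 := Nat.cast_add_one_ne_zero n
    have hb : ((n : ℂ) + 1) * z ≠ 0 := mul_ne_zero hn1 hz0
    have hfun : ∀ t : ℝ, H n t = z ^ 2 * ((t : ℂ) * Complex.exp (-((((n : ℂ) + 1) * z) * t))) := by
      intro t; rw [hH_def]; ring
    have hexpb : Complex.exp (-(((n : ℂ) + 1) * z)) = q ^ (n + 1) := by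
      rw [hq_def, ← Complex.exp_nat_mul]
      congr 1
      push_cast
      ring
    rw [← intervalIntegral.integral_of_le (zero_le_one)]
    calc (∫ t in (0:ℝ)..1, H n t)
        = ∫ t in (0:ℝ)..1, z ^ 2 * ((t : ℂ) * Complex.exp (-((((n : ℂ) + 1) * z) * t))) := by
          simp_rw [hfun]
      _ = z ^ 2 * ∫ t in (0:ℝ)..1, (t : ℂ) * Complex.exp (-((((n : ℂ) + 1) * z) * t)) :=
          intervalIntegral.integral_const_mul _ _
      _ = z ^ 2 * (1 / (((n : ℂ) + 1) * z) ^ 2 - q ^ (n+1) / (((n : ℂ) + 1) * z) ^ 2 -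
            q ^ (n+1) / (((n : ℂ) + 1) * z)) := by rw [ftc_c _ hb, hexpb]
      _ = -(q ^ (n + 1) / ((n : ℂ) + 1) ^ 2 - 1 / ((n : ℂ) + 1) ^ 2 +
            z * (q ^ (n + 1) / ((n : ℂ) + 1))) := by
          field_simp
          ring
  -- integrability and summability for the swap
  have hHint : ∀ n : ℕ, Integrable (H n) (volume.restrict (Set.Ioc (0:ℝ) 1)) := by
    intro n
    apply Continuous.integrableOn_Ioc
    fun_prop
  have hHsum : Summable (fun n : ℕ => ∫ t in Set.Ioc (0:ℝ) 1, ‖H n t‖) := by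
    have hbase : Summable (fun n : ℕ => (1:ℝ) / ((n : ℝ) + 1) ^ 2) := by
      have h0 : Summable (fun n : ℕ => (1:ℝ) / (n : ℝ) ^ 2) :=
        Real.summable_one_div_nat_pow.mpr one_lt_two
      have := (summable_nat_add_iff (f := fun n : ℕ => (1:ℝ) / (n : ℝ) ^ 2) 1).mpr h0
      push_cast at this
      exact this
    refine Summable.of_nonneg_of_le (fun n => ?_) (fun n => ?_)
      (hbase.mul_left (‖z‖ ^ 2 / z.re ^ 2))
    · apply integral_nonneg
      intro t
      exact norm_nonneg _
    · 
      have hb : 0 < ((n : ℝ) + 1) * z.re := by positivity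
      have heq : Set.EqOn (fun t : ℝ => ‖H n t‖)
          (fun t : ℝ => ‖z‖ ^ 2 * (t * Real.exp (-((((n : ℝ) + 1) * z.re) * t))))
          (Set.Ioc (0:ℝ) 1) := by
        intro t ht
        have ht0 : 0 < t := ht.1
        have hre_eq : (-((((n : ℂ) + 1) * z) * (t : ℂ))).re = -((((n : ℝ) + 1) * z.re) * t) := by
          have h1 : (((n : ℂ) + 1) * z) * (t : ℂ) = ((((n : ℝ) + 1) * t : ℝ) : ℂ) * z := by
            push_cast; ring
          rw [Complex.neg_re, h1, Complex.re_ofReal_mul]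
          ring
        simp only [hH_def, norm_mul, map_mul, Complex.norm_real, Real.norm_eq_abs,
          Complex.norm_exp, hre_eq, map_pow, norm_pow]
        rw [abs_of_pos ht0]
        ring
      rw [setIntegral_congr_fun measurableSet_Ioc heq]
      rw [integral_const_mul, ← intervalIntegral.integral_of_le (zero_le_one)]
      have hftc := ftc_r _ hb
      have hz2 : (0:ℝ) ≤ ‖z‖ ^ 2 := sq_nonneg _
      calc ‖z‖ ^ 2 * ∫ t in (0:ℝ)..1, t * Real.exp (-((((n : ℝ) + 1) * z.re) * t))
          ≤ ‖z‖ ^ 2 * (1 / (((n : ℝ) + 1) * z.re) ^ 2) :=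
            mul_le_mul_of_nonneg_left hftc hz2
        _ = (‖z‖ ^ 2 / z.re ^ 2) * ((1:ℝ) / ((n : ℝ) + 1) ^ 2) := by
            have hc : z.re ≠ 0 := ne_of_gt hre
            have hn : ((n : ℝ) + 1) ≠ 0 := by positivity
            field_simp
  have hswap : ∑' n : ℕ, ∫ t in Set.Ioc (0:ℝ) 1, H n t =
      ∫ t in Set.Ioc (0:ℝ) 1, ∑' n : ℕ, H n t :=
    integral_tsum_of_summable_integral_norm hHint hHsum
  -- identify the sum with the HasSum above
  have hIsum : HasSum (fun n : ℕ => ∫ t in Set.Ioc (0:ℝ) 1, H n t)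
      (-(Li2 q - (π : ℂ) ^ 2 / 6 + z * (-Complex.log (1 - q)))) := by
    have := hsumA.neg
    simp_rw [← hHval] at this
    exact this
  have hkey : Li2 q - (π : ℂ) ^ 2 / 6 - z * Complex.log (1 - q) =
      -∫ t in Set.Ioc (0:ℝ) 1, ∑' n : ℕ, H n t := by
    rw [← hswap, hIsum.tsum_eq]
    ring
  -- pointwise form and bound of the summed integrand
  set G : ℝ → ℂ := fun t => (t : ℂ) * z ^ 2 *
      (Complex.exp (-(z * t)) * (1 - Complex.exp (-(z * t)))⁻¹) with hG_def
  have hts : ∀ t ∈ Set.Ioc (0:ℝ) 1, (∑' n : ℕ, H n t) = G t := by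
    intro t ht
    have ht0 : 0 < t := ht.1
    have hrlt : ‖Complex.exp (-(z * t))‖ < 1 := by
      rw [Complex.norm_exp]
      apply Real.exp_lt_one_iff.mpr
      have : (z * (t:ℂ)).re = t * z.re := by
        rw [mul_comm, Complex.re_ofReal_mul]
      rw [Complex.neg_re, this]
      nlinarith
    have hHn : ∀ n : ℕ, H n t = (t : ℂ) * z ^ 2 * (Complex.exp (-(z * t)) *
        Complex.exp (-(z * t)) ^ n) := by
      intro n
      simp only [hH_def]
      congr 1
      rw [← pow_succ', ← Complex.exp_nat_mul]
      congr 1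
      push_cast
      ring
    simp_rw [hHn]
    rw [tsum_mul_left, tsum_mul_left, tsum_geometric_of_norm_lt_one hrlt]
  have hpoint : ∀ t ∈ Set.Ioc (0:ℝ) 1,
      ‖z - ∑' n : ℕ, H n t‖ ≤ 2 * ‖z‖ ^ 2 := by
    intro t ht
    have ht0 : 0 < t := ht.1
    have ht1 : t ≤ 1 := ht.2
    set u : ℂ := z * t with hu_def
    have hu0 : u ≠ 0 := mul_ne_zero hz0 (by exact_mod_cast ht0.ne')
    have habs_u : ‖u‖ = ‖z‖ * t := by
      rw [hu_def, norm_mul, Complex.norm_real, Real.norm_eq_abs, abs_of_pos ht0]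
    have hu_half : ‖u‖ ≤ 1 / 2 := by
      rw [habs_u]
      nlinarith [norm_nonneg z]
    have hGu : G t = z * (u * (Complex.exp u - 1)⁻¹) := by
      have hfac : 1 - Complex.exp (-u) = Complex.exp (-u) * (Complex.exp u - 1) := by
        rw [mul_sub, ← Complex.exp_add]
        simp
      simp only [hG_def]
      show (t : ℂ) * z ^ 2 * (Complex.exp (-u) * (1 - Complex.exp (-u))⁻¹) = _
      rw [hfac, mul_inv, ← mul_assoc (Complex.exp (-u)),
        mul_inv_cancel₀ (Complex.exp_ne_zero _), one_mul, hu_def]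
      ring
    rw [hts t ht, hGu]
    have : z - z * (u * (Complex.exp u - 1)⁻¹) = z * (1 - u * (Complex.exp u - 1)⁻¹) := by ring
    rw [this, norm_mul]
    calc ‖z‖ * ‖1 - u * (Complex.exp u - 1)⁻¹‖
        ≤ ‖z‖ * (2 * ‖u‖) :=
          mul_le_mul_of_nonneg_left (phi_bound u hu0 hu_half) (norm_nonneg z)
      _ = 2 * (‖z‖ * (‖z‖ * t)) := by rw [habs_u]; ring
      _ ≤ 2 * ‖z‖ ^ 2 := by nlinarith [norm_nonneg z]
  -- the value of the integrand a.e. equals a nice function; integrate the difference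
  have hSint : Integrable (fun t : ℝ => ∑' n : ℕ, H n t) (volume.restrict (Set.Ioc (0:ℝ) 1)) := by
    have hGcont : ContinuousOn G (Set.Ioc (0:ℝ) 1) := by
      have hden : ∀ t ∈ Set.Ioc (0:ℝ) 1, (1 - Complex.exp (-(z * t))) ≠ 0 := by
        intro t ht
        have ht0 : 0 < t := ht.1
        have hrlt : ‖Complex.exp (-(z * t))‖ < 1 := by
          rw [Complex.norm_exp]
          apply Real.exp_lt_one_iff.mpr
          have : (z * (t:ℂ)).re = t * z.re := by rw [mul_comm, Complex.re_ofReal_mul]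
          rw [Complex.neg_re, this]
          nlinarith
        intro h
        have : Complex.exp (-(z * t)) = 1 := by linear_combination -h
        rw [this] at hrlt
        simp at hrlt
      apply ContinuousOn.mul
      · fun_prop
      · apply ContinuousOn.mul
        · fun_prop
        · exact ContinuousOn.inv₀ (by fun_prop) hden
    have hGmeas : AEStronglyMeasurable G (volume.restrict (Set.Ioc (0:ℝ) 1)) :=
      hGcont.aestronglyMeasurable measurableSet_Ioc
    have hGbdd : ∀ t ∈ Set.Ioc (0:ℝ) 1, ‖G t‖ ≤ ‖z‖ + 2 * ‖z‖ ^ 2 := by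
      intro t ht
      have h1 := hpoint t ht
      rw [hts t ht] at h1
      calc ‖G t‖ = ‖G t - z + z‖ := by rw [sub_add_cancel]
        _ ≤ ‖G t - z‖ + ‖z‖ := norm_add_le _ _
        _ = ‖z - G t‖ + ‖z‖ := by rw [norm_sub_rev]
        _ ≤ 2 * ‖z‖ ^ 2 + ‖z‖ := by linarith
        _ = ‖z‖ + 2 * ‖z‖ ^ 2 := by ring
    have hGint : Integrable G (volume.restrict (Set.Ioc (0:ℝ) 1)) := by
      apply Integrable.mono' (integrable_const (‖z‖ + 2 * ‖z‖ ^ 2)) hGmeas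
      exact (ae_restrict_iff' measurableSet_Ioc).mpr (Filter.Eventually.of_forall hGbdd)
    apply hGint.congr
    exact (ae_restrict_iff' measurableSet_Ioc).mpr
      (Filter.Eventually.of_forall (fun t ht => (hts t ht).symm))
  have hzconst : ∫ _t in Set.Ioc (0:ℝ) 1, z = z := by
    simp [Real.volume_Ioc]
  have hE : Li2 q - (-z + (π : ℂ) ^ 2 / 6 + z * Complex.log (1 - q)) =
      ∫ t in Set.Ioc (0:ℝ) 1, (z - ∑' n : ℕ, H n t) := by
    rw [integral_sub (integrableOn_const (C := z) (s := Set.Ioc (0:ℝ) 1) (μ := volume) (by simp [Real.volume_Ioc])) hSint,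
      hzconst]
    have : Li2 q - (-z + (π : ℂ) ^ 2 / 6 + z * Complex.log (1 - q)) =
        z + (Li2 q - (π : ℂ) ^ 2 / 6 - z * Complex.log (1 - q)) := by ring
    rw [this, hkey]
    ring
  rw [hE]
  have := norm_setIntegral_le_of_norm_le_const (μ := volume) (s := Set.Ioc (0:ℝ) 1)
      (C := 2 * ‖z‖ ^ 2) (by simp [Real.volume_Ioc])
      (f := fun t => z - ∑' n : ℕ, H n t) (fun t ht => by
        simpa using hpoint t ht)
  simpa [Real.volume_Ioc] using this

theorem Li2_exp_asymptotic (w : ℂ) (hw : 0 < w.re) :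
    (fun τ : ℝ =>
        Li2 (Complex.exp (-(π : ℂ) * τ * w)) -
          (-(π : ℂ) * τ * w + (π : ℂ) ^ 2 / 6 +
            (π : ℂ) * τ * w * Complex.log (1 - Complex.exp (-(π : ℂ) * τ * w))))
      =O[nhdsWithin 0 (Set.Ioi 0)] fun τ : ℝ => τ ^ 2 := by
  have hw0 : (0:ℝ) < ‖w‖ := by
    have hwne : w ≠ 0 := fun h => by simp [h] at hw
    simpa [norm_pos_iff] using hwne
  have hpi : (0:ℝ) < π := Real.pi_pos
  have hδ : (0:ℝ) < 1 / (4 * π * ‖w‖) := by positivity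
  rw [isBigO_iff]
  refine ⟨2 * π ^ 2 * ‖w‖ ^ 2, ?_⟩
  filter_upwards [Ioo_mem_nhdsGT_of_mem (Set.mem_Ico.mpr ⟨le_refl (0:ℝ), hδ⟩)] with τ hτ
  obtain ⟨hτ0, hτδ⟩ := hτ
  simp only [neg_mul]
  set z : ℂ := (π : ℂ) * τ * w with hz_def
  have habs : ‖z‖ = π * τ * ‖w‖ := by
    rw [hz_def, norm_mul, norm_mul, Complex.norm_real, Real.norm_eq_abs, Complex.norm_real, Real.norm_eq_abs,
      abs_of_pos hpi, abs_of_pos hτ0]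
  have hre : 0 < z.re := by
    have hzz : z = ((π * τ : ℝ) : ℂ) * w := by rw [hz_def]; push_cast; ring
    rw [hzz, Complex.re_ofReal_mul]
    positivity
  have hzh : ‖z‖ ≤ 1 / 2 := by
    rw [habs]
    have h4 : τ * (4 * π * ‖w‖) < 1 := (lt_div_iff₀ (by positivity)).mp hτδ
    nlinarith
  have hmain := main_est z hre hzh
  have hnorm : ‖Li2 (Complex.exp (-z)) -
      (-z + (π : ℂ) ^ 2 / 6 + z * Complex.log (1 - Complex.exp (-z)))‖ ≤
      2 * π ^ 2 * ‖w‖ ^ 2 * τ ^ 2 := by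
    calc ‖Li2 (Complex.exp (-z)) -
          (-z + (π : ℂ) ^ 2 / 6 + z * Complex.log (1 - Complex.exp (-z)))‖
        ≤ 2 * ‖z‖ ^ 2 := hmain
      _ = 2 * π ^ 2 * ‖w‖ ^ 2 * τ ^ 2 := by rw [habs]; ring
  calc ‖Li2 (Complex.exp (-z)) -
        (-z + (π : ℂ) ^ 2 / 6 + z * Complex.log (1 - Complex.exp (-z)))‖
      ≤ 2 * π ^ 2 * ‖w‖ ^ 2 * τ ^ 2 := hnorm
    _ = 2 * π ^ 2 * ‖w‖ ^ 2 * ‖τ ^ 2‖ := by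
        rw [Real.norm_eq_abs, abs_of_pos (by positivity : (0:ℝ) < τ ^ 2)]
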